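/- For all vectors α, β ∈ ℂ²⊗ℂ² ≅ ℂ⁴: if ⟨χ_{ij}, α ⊗ β⟩ = 0 for every ordered pair (i,j) with i, j ∈ {1,2,3,4} and i ≠ j, then α ⊗ β = 0 (i.e., α = 0 or β = 0). In other words, no nonzero product vector across the ℂ⁴ : ℂ⁴ bipartition lies in the orthogonal complement of the span of the 12 vectors χ_{ij}; the set S^{↑↓}_{(2)} is an unextendible product basis. (Key step of Theorem 2: S^{↑↓} does not allow 2-CLSM.) -/

import Mathlib

/-!
Statement 10: No nonzero product vector across the ℂ⁴ : ℂ⁴ bipartition lies in the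
orthogonal complement of the span of the 12 vectors χ_{ij}: the 2-CLSM set S^{↑↓}_{(2)}
is an unextendible product basis.
-/

noncomputable section
open scoped ComplexInnerProductSpace

/-- The qubit Hilbert space `ℂ²`. -/
abbrev Qubit : Type := EuclideanSpace ℂ (Fin 2)

/-- The (Kronecker) tensor product of two vectors, realized in `EuclideanSpace ℂ (ι × κ)`. -/
def tp {ι κ : Type} (x : EuclideanSpace ℂ ι) (y : EuclideanSpace ℂ κ) :
    EuclideanSpace ℂ (ι × κ) :=
  (WithLp.equiv 2 (ι × κ → ℂ)).symm (fun p => x p.1 * y p.2)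

/-- A qubit vector from its two coordinates. -/
def mk2 (a b : ℂ) : Qubit := (WithLp.equiv 2 (Fin 2 → ℂ)).symm ![a, b]

/-- The cube root of unity phases `ζ k = exp(2πik/3)`. -/
def ζ (k : ℤ) : ℂ := Complex.exp (2 * (Real.pi : ℂ) * Complex.I * (k : ℂ) / 3)

/-- `1/√3` in `ℂ`. -/
def r3 : ℂ := ((Real.sqrt 3 : ℂ))⁻¹

/-- `√2` in `ℂ`. -/
def r2 : ℂ := (Real.sqrt 2 : ℂ)

/-- The qubit SIC states: `s 0 = |0⟩` and
`s j = (1/√3)(|0⟩ + √2 e^{2πi(j-1)/3} |1⟩)` for `j = 1, 2, 3`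
(indexing the paper's `s_1, …, s_4` by `Fin 4`). -/
def s : Fin 4 → Qubit :=
  ![mk2 1 0,
    mk2 r3 (r3 * r2 * ζ 0),
    mk2 r3 (r3 * r2 * ζ 1),
    mk2 r3 (r3 * r2 * ζ 2)]

/-- The orthogonal SIC states: `sperp 0 = |1⟩` and
`sperp j = (1/√3)(√2 e^{-2πi(j-1)/3} |0⟩ - |1⟩)` for `j = 1, 2, 3`. -/
def sperp : Fin 4 → Qubit :=
  ![mk2 0 1,
    mk2 (r3 * r2 * ζ 0) (-r3),
    mk2 (r3 * r2 * ζ (-1)) (-r3),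
    mk2 (r3 * r2 * ζ (-2)) (-r3)]

/-- The 2-CLSM vectors `χ_{ij} = (s_i ⊗ s_j) ⊗ (s_i^⊥ ⊗ s_j^⊥)`, the first `ℂ⁴` factor
being Alice's system and the second Bob's. -/
def χ (i j : Fin 4) : EuclideanSpace ℂ ((Fin 2 × Fin 2) × (Fin 2 × Fin 2)) :=
  tp (tp (s i) (s j)) (tp (sperp i) (sperp j))

/-! ### Auxiliary material -/

lemma r3_ne : r3 ≠ 0 := by
  simp only [r3, ne_eq, inv_eq_zero, Complex.ofReal_eq_zero]; positivity

lemma r2_ne : r2 ≠ 0 := by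
  simp only [r2, ne_eq, Complex.ofReal_eq_zero]; positivity

lemma zeta_ne_zero (k : ℤ) : ζ k ≠ 0 := Complex.exp_ne_zero _

lemma two_pi_I_ne : (2 * (Real.pi : ℂ) * Complex.I) ≠ 0 := by
  refine mul_ne_zero (mul_ne_zero two_ne_zero ?_) Complex.I_ne_zero
  simp [Complex.ofReal_ne_zero, Real.pi_ne_zero]

lemma zeta_ne_one (k : ℤ) (hk : ¬ (3 ∣ k)) : ζ k ≠ 1 := by
  intro hc
  rw [ζ, Complex.exp_eq_one_iff] at hc
  obtain ⟨n, hn⟩ := hc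
  have h0 : (2 * (Real.pi : ℂ) * Complex.I) * ((k : ℂ) - 3 * n) = 0 := by
    linear_combination 3 * hn
  rcases mul_eq_zero.mp h0 with h | h
  · exact two_pi_I_ne h
  · have hkc : (k : ℂ) = ((3 * n : ℤ) : ℂ) := by push_cast; linear_combination h
    exact hk ⟨n, by exact_mod_cast hkc⟩

lemma zeta_sub_zeta (a b : ℤ) : ζ a = ζ (a - b) * ζ b := by
  rw [ζ, ζ, ζ, ← Complex.exp_add]; congr 1; push_cast; ring

lemma zeta_ne (a b : ℤ) (h : ¬ (3 ∣ (a - b))) : ζ a ≠ ζ b := by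
  intro hc
  apply zeta_ne_one (a - b) h
  have h2 := zeta_sub_zeta a b
  rw [hc] at h2
  field_simp [zeta_ne_zero b] at h2
  linear_combination -h2

lemma zeta_conj (k : ℤ) : (starRingEnd ℂ) (ζ k) = ζ (-k) := by
  rw [ζ, ζ, ← Complex.exp_conj]
  congr 1
  simp only [map_div₀, map_mul, Complex.conj_I, Complex.conj_ofReal, map_ofNat, map_intCast]
  push_cast; ring

/-- The bilinear form `u^T M v` on `ℂ²` with matrix entries `m00 m01 m10 m11`. -/
def bil (u v : ℂ × ℂ) (m00 m01 m10 m11 : ℂ) : ℂ :=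
  u.1*v.1*m00 + u.1*v.2*m01 + u.2*v.1*m10 + u.2*v.2*m11

lemma solve2 {a1 a2 b1 b2 w1 w2 : ℂ} (hd : a1*b2 - a2*b1 ≠ 0)
    (h1 : a1*w1 + a2*w2 = 0) (h2 : b1*w1 + b2*w2 = 0) : w1 = 0 ∧ w2 = 0 := by
  constructor
  · have hz : (a1*b2 - a2*b1) * w1 = 0 := by linear_combination b2*h1 - a2*h2
    exact (mul_eq_zero.mp hz).resolve_left hd
  · have hz : (a1*b2 - a2*b1) * w2 = 0 := by linear_combination a1*h2 - b1*h1
    exact (mul_eq_zero.mp hz).resolve_left hd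

/-- The abstract UPB argument: if `t 0, …, t 3` are pairwise independent in `ℂ²`,
likewise `x 0, …, x 3`, and the products `(tᵢᵀ M tⱼ)(xᵢᵀ N xⱼ)` vanish for all `i ≠ j`,
then `M = 0` or `N = 0` (here: `M ≠ 0 → N = 0`). -/
lemma half (t x : Fin 4 → ℂ × ℂ)
    (hdt : ∀ i j : Fin 4, i ≠ j → (t i).1*(t j).2 - (t i).2*(t j).1 ≠ 0)
    (hdx : ∀ i j : Fin 4, i ≠ j → (x i).1*(x j).2 - (x i).2*(x j).1 ≠ 0)
    (m00 m01 m10 m11 n00 n01 n10 n11 : ℂ)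
    (h : ∀ i j : Fin 4, i ≠ j →
      bil (t i) (t j) m00 m01 m10 m11 * bil (x i) (x j) n00 n01 n10 n11 = 0)
    (hM : ¬(m00 = 0 ∧ m01 = 0 ∧ m10 = 0 ∧ m11 = 0)) :
    n00 = 0 ∧ n01 = 0 ∧ n10 = 0 ∧ n11 = 0 := by
  have key0 : ∀ i j : Fin 4, i ≠ j →
      (t i).1*m00 + (t i).2*m10 = 0 → (t i).1*m01 + (t i).2*m11 = 0 →
      (t j).1*m00 + (t j).2*m10 = 0 → (t j).1*m01 + (t j).2*m11 = 0 → False := by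
    intro i j hij h1 h2 h3 h4
    obtain ⟨e1, e2⟩ := solve2 (hdt i j hij) h1 h3
    obtain ⟨e3, e4⟩ := solve2 (hdt i j hij) h2 h4
    exact hM ⟨e1, e3, e2, e4⟩
  have step : ∀ i j1 j2 : Fin 4, i ≠ j1 → i ≠ j2 → j1 ≠ j2 →
      bil (t i) (t j1) m00 m01 m10 m11 ≠ 0 → bil (t i) (t j2) m00 m01 m10 m11 ≠ 0 →
      (x i).1*n00 + (x i).2*n10 = 0 ∧ (x i).1*n01 + (x i).2*n11 = 0 := by
    intro i j1 j2 hij1 hij2 hj hA1 hA2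
    have hB1 := (mul_eq_zero.mp (h i j1 hij1)).resolve_left hA1
    have hB2 := (mul_eq_zero.mp (h i j2 hij2)).resolve_left hA2
    simp only [bil] at hB1 hB2
    have hB1' : (x j1).1 * ((x i).1*n00 + (x i).2*n10)
        + (x j1).2 * ((x i).1*n01 + (x i).2*n11) = 0 := by linear_combination hB1
    have hB2' : (x j2).1 * ((x i).1*n00 + (x i).2*n10)
        + (x j2).2 * ((x i).1*n01 + (x i).2*n11) = 0 := by linear_combination hB2
    exact solve2 (hdx j1 j2 hj) hB1' hB2'
  have pick : ∀ i j1 j2 j3 : Fin 4, i ≠ j1 → i ≠ j2 → i ≠ j3 →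
      j1 ≠ j2 → j1 ≠ j3 → j2 ≠ j3 →
      ¬((t i).1*m00 + (t i).2*m10 = 0 ∧ (t i).1*m01 + (t i).2*m11 = 0) →
      (x i).1*n00 + (x i).2*n10 = 0 ∧ (x i).1*n01 + (x i).2*n11 = 0 := by
    intro i j1 j2 j3 h1 h2 h3 h12 h13 h23 hri
    have key : ∀ ja jb : Fin 4, ja ≠ jb →
        bil (t i) (t ja) m00 m01 m10 m11 = 0 →
        bil (t i) (t jb) m00 m01 m10 m11 = 0 → False := by
      intro ja jb hab e1 e2
      simp only [bil] at e1 e2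
      have e1' : (t ja).1*((t i).1*m00+(t i).2*m10)
          + (t ja).2*((t i).1*m01+(t i).2*m11) = 0 := by linear_combination e1
      have e2' : (t jb).1*((t i).1*m00+(t i).2*m10)
          + (t jb).2*((t i).1*m01+(t i).2*m11) = 0 := by linear_combination e2
      exact hri (solve2 (hdt ja jb hab) e1' e2')
    by_cases c1 : bil (t i) (t j1) m00 m01 m10 m11 = 0
    · exact step i j2 j3 h2 h3 h23 (fun c => key j1 j2 h12 c1 c) (fun c => key j1 j3 h13 c1 c)
    · by_cases c2 : bil (t i) (t j2) m00 m01 m10 m11 = 0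
      · exact step i j1 j3 h1 h3 h13 c1 (fun c => key j2 j3 h23 c2 c)
      · exact step i j1 j2 h1 h2 h12 c1 c2
  have finish : ∀ i j : Fin 4, i ≠ j →
      ((x i).1*n00+(x i).2*n10 = 0 ∧ (x i).1*n01+(x i).2*n11 = 0) →
      ((x j).1*n00+(x j).2*n10 = 0 ∧ (x j).1*n01+(x j).2*n11 = 0) →
      n00 = 0 ∧ n01 = 0 ∧ n10 = 0 ∧ n11 = 0 := by
    intro i j hij hi hj
    obtain ⟨e1, e2⟩ := solve2 (hdx i j hij) hi.1 hj.1
    obtain ⟨e3, e4⟩ := solve2 (hdx i j hij) hi.2 hj.2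
    exact ⟨e1, e3, e2, e4⟩
  by_cases hr0 : ((t 0).1*m00 + (t 0).2*m10 = 0 ∧ (t 0).1*m01 + (t 0).2*m11 = 0)
  · have hr1 : ¬((t 1).1*m00 + (t 1).2*m10 = 0 ∧ (t 1).1*m01 + (t 1).2*m11 = 0) :=
      fun c => key0 0 1 (by decide) hr0.1 hr0.2 c.1 c.2
    have hr2 : ¬((t 2).1*m00 + (t 2).2*m10 = 0 ∧ (t 2).1*m01 + (t 2).2*m11 = 0) :=
      fun c => key0 0 2 (by decide) hr0.1 hr0.2 c.1 c.2
    exact finish 1 2 (by decide)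
      (pick 1 0 2 3 (by decide) (by decide) (by decide) (by decide) (by decide) (by decide) hr1)
      (pick 2 0 1 3 (by decide) (by decide) (by decide) (by decide) (by decide) (by decide) hr2)
  · by_cases hr1 : ((t 1).1*m00 + (t 1).2*m10 = 0 ∧ (t 1).1*m01 + (t 1).2*m11 = 0)
    · have hr2 : ¬((t 2).1*m00 + (t 2).2*m10 = 0 ∧ (t 2).1*m01 + (t 2).2*m11 = 0) :=
        fun c => key0 1 2 (by decide) hr1.1 hr1.2 c.1 c.2
      exact finish 0 2 (by decide)
        (pick 0 1 2 3 (by decide) (by decide) (by decide) (by decide) (by decide) (by decide) hr0)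
        (pick 2 0 1 3 (by decide) (by decide) (by decide) (by decide) (by decide) (by decide) hr2)
    · exact finish 0 1 (by decide)
        (pick 0 1 2 3 (by decide) (by decide) (by decide) (by decide) (by decide) (by decide) hr0)
        (pick 1 0 2 3 (by decide) (by decide) (by decide) (by decide) (by decide) (by decide) hr1)

lemma inner_tp {ι κ : Type} [Fintype ι] [Fintype κ]
    (a c : EuclideanSpace ℂ ι) (b d : EuclideanSpace ℂ κ) :
    ⟪tp a b, tp c d⟫ = ⟪a, c⟫ * ⟪b, d⟫ := by
  simp only [tp, PiLp.inner_apply, RCLike.inner_apply, WithLp.equiv_symm_apply, PiLp.toLp_apply, map_mul]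
  rw [Fintype.sum_prod_type, Finset.sum_mul_sum]
  congr 1; ext i; congr 1; ext k; ring

lemma inner_tp_coord (u v : Qubit) (γ : EuclideanSpace ℂ (Fin 2 × Fin 2)) :
    ⟪tp u v, γ⟫ = bil ((starRingEnd ℂ) (u 0), (starRingEnd ℂ) (u 1))
      ((starRingEnd ℂ) (v 0), (starRingEnd ℂ) (v 1))
      (γ (0,0)) (γ (0,1)) (γ (1,0)) (γ (1,1)) := by
  simp only [tp, PiLp.inner_apply, RCLike.inner_apply, WithLp.equiv_symm_apply, PiLp.toLp_apply, map_mul]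
  rw [Fintype.sum_prod_type]
  simp only [Fin.sum_univ_two, bil]
  ring

/-- Conjugated coordinates of the SIC states. -/
def T : Fin 4 → ℂ × ℂ :=
  ![(1,0), (r3, r3*r2*ζ 0), (r3, r3*r2*ζ (-1)), (r3, r3*r2*ζ (-2))]

/-- Conjugated coordinates of the orthogonal SIC states. -/
def X : Fin 4 → ℂ × ℂ :=
  ![(0,1), (r3*r2*ζ 0, -r3), (r3*r2*ζ 1, -r3), (r3*r2*ζ 2, -r3)]

lemma conj_s (i : Fin 4) :
    ((starRingEnd ℂ) (s i 0), (starRingEnd ℂ) (s i 1)) = T i := by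
  fin_cases i <;>
    simp [s, T, mk2, r3, r2, zeta_conj, WithLp.equiv_symm_apply, PiLp.toLp_apply, map_inv₀,
      Complex.conj_ofReal]

lemma conj_sperp (i : Fin 4) :
    ((starRingEnd ℂ) (sperp i 0), (starRingEnd ℂ) (sperp i 1)) = X i := by
  fin_cases i <;>
    simp [sperp, X, mk2, r3, r2, zeta_conj, WithLp.equiv_symm_apply, PiLp.toLp_apply, map_inv₀,
      Complex.conj_ofReal]

lemma cancel3 {a b : ℤ} (hc : r3*(r3*r2*ζ a) - r3*r2*ζ b*r3 = 0) : ζ a = ζ b := by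
  have h1 : r3*r3*r2 ≠ 0 := mul_ne_zero (mul_ne_zero r3_ne r3_ne) r2_ne
  have h2 : r3*r3*r2*(ζ a - ζ b) = 0 := by linear_combination hc
  exact sub_eq_zero.mp ((mul_eq_zero.mp h2).resolve_left h1)

lemma cancel3' {a b : ℤ} (hc : -(r3*r2*ζ a*r3) + r3*(r3*r2*ζ b) = 0) : ζ b = ζ a :=
  cancel3 (by linear_combination hc)

lemma hdT : ∀ i j : Fin 4, i ≠ j → (T i).1*(T j).2 - (T i).2*(T j).1 ≠ 0 := by
  intro i j hij
  fin_cases i <;> fin_cases j <;> simp_all [T] <;>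
    first
      | exact ⟨⟨r3_ne, r2_ne⟩, zeta_ne_zero _⟩
      | exact fun hc => zeta_ne _ _ (by decide) (cancel3 hc)

lemma hdX : ∀ i j : Fin 4, i ≠ j → (X i).1*(X j).2 - (X i).2*(X j).1 ≠ 0 := by
  intro i j hij
  fin_cases i <;> fin_cases j <;> simp_all [X] <;>
    first
      | exact ⟨⟨r3_ne, r2_ne⟩, zeta_ne_zero _⟩
      | exact fun hc => zeta_ne _ _ (by decide) (cancel3' hc)

lemma tp_zero_left {ι κ : Type} (y : EuclideanSpace ℂ κ) :
    tp (0 : EuclideanSpace ℂ ι) y = 0 := by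
  ext p
  simp [tp]

lemma tp_zero_right {ι κ : Type} (y : EuclideanSpace ℂ ι) :
    tp y (0 : EuclideanSpace ℂ κ) = 0 := by
  ext p
  simp [tp]

lemma eq_zero_of_coords (γ : EuclideanSpace ℂ (Fin 2 × Fin 2))
    (h : γ (0,0) = 0 ∧ γ (0,1) = 0 ∧ γ (1,0) = 0 ∧ γ (1,1) = 0) : γ = 0 := by
  obtain ⟨h1, h2, h3, h4⟩ := h
  ext p
  obtain ⟨p1, p2⟩ := p
  fin_cases p1 <;> fin_cases p2 <;> simpa

/-- If a product vector `α ⊗ β` (with `α, β ∈ ℂ²⊗ℂ² ≅ ℂ⁴`) is orthogonal to every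
`χ_{ij}` with `i ≠ j`, then `α ⊗ β = 0`; i.e. `S^{↑↓}_{(2)}` is a UPB. -/
theorem antiparallel_double_SIC_2CLSM_UPB
    (α β : EuclideanSpace ℂ (Fin 2 × Fin 2))
    (h : ∀ i j : Fin 4, i ≠ j → ⟪χ i j, tp α β⟫ = 0) :
    tp α β = 0 := by
  by_cases hM : (α (0,0) = 0 ∧ α (0,1) = 0 ∧ α (1,0) = 0 ∧ α (1,1) = 0)
  · rw [eq_zero_of_coords α hM, tp_zero_left]
  · have hcond : ∀ i j : Fin 4, i ≠ j →
        bil (T i) (T j) (α (0,0)) (α (0,1)) (α (1,0)) (α (1,1)) *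
        bil (X i) (X j) (β (0,0)) (β (0,1)) (β (1,0)) (β (1,1)) = 0 := by
      intro i j hij
      have hh := h i j hij
      rw [χ, inner_tp, inner_tp_coord, inner_tp_coord, conj_s, conj_s,
        conj_sperp, conj_sperp] at hh
      exact hh
    have hN := half T X hdT hdX _ _ _ _ _ _ _ _ hcond hM
    rw [eq_zero_of_coords β hN, tp_zero_right]
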